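/- arXiv:2510.10706 — 4 statements merged into one kernel-verified Lean document; each statement's English description precedes it below -/
import Mathlib

section
/- Matching characterization (Proposition 1): Let E(T) = t₁,…,t_{2n} be the Euler string of a tree T over {1,…,m}. A position i with 1 ≤ i ≤ 2n is the outward edge of the inward edge at position ℓ (i.e., ℓ and i are the two positions contributed by the same vertex) if and only if: (i) 1 ≤ ℓ ≤ i−1; (ii) t_i = t_ℓ + m; (iii) the number of inward symbols strictly between positions ℓ and i equals the number of outward symbols strictly between them; and (iv) ℓ is the largest index satisfying (i)–(iii). -/
inductive LTree : Type
  | node : ℕ → List LTree → LTree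

namespace LTree

/-- Euler string of a forest (ordered list of labeled subtrees). -/
def eulerF (m : ℕ) : List LTree → List ℕ
  | [] => []
  | node b cs :: rest => b :: (eulerF m cs ++ (b + m) :: eulerF m rest)

/-- Euler string of a single tree viewed as a forest element. -/
def eulerT (m : ℕ) (t : LTree) : List ℕ := eulerF m [t]

/-- Labels of all vertices of a forest. -/
def labelsF : List LTree → List ℕ
  | [] => []
  | node b cs :: rest => b :: (labelsF cs ++ labelsF rest)

/-- All labels lie in `{1, …, m}`. -/
def WFforest (m : ℕ) (f : List LTree) : Prop := ∀ b ∈ labelsF f, 1 ≤ b ∧ b ≤ m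

/-- Number of vertices of a forest (= number of non-root vertices of the tree). -/
def countF : List LTree → ℕ
  | [] => 0
  | node _ cs :: rest => 1 + countF cs + countF rest

/-- Matched pairs of (1-indexed) inward/outward positions in the Euler string,
together with the vertex contributing them, for a forest whose Euler string
starts at offset `o`. -/
def pairsV (m : ℕ) : List LTree → ℕ → List (LTree × ℕ × ℕ)
  | [], _ => []
  | node b cs :: rest, o =>
      (node b cs, o + 1, o + (eulerF m cs).length + 2) ::
        (pairsV m cs (o + 1) ++ pairsV m rest (o + (eulerF m cs).length + 2))

/-- Matched pairs of (1-indexed) inward/outward positions. -/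
def pairsF (m : ℕ) (f : List LTree) (o : ℕ) : List (ℕ × ℕ) :=
  (pairsV m f o).map Prod.snd

/-- Number of inward symbols (≤ m) strictly between 1-indexed positions ℓ and i. -/
def inBetween (m : ℕ) (s : List ℕ) (ℓ i : ℕ) : ℕ :=
  ((s.drop ℓ).take (i - ℓ - 1)).countP (fun t => decide (t ≤ m))

/-- Number of outward symbols (> m) strictly between 1-indexed positions ℓ and i. -/
def outBetween (m : ℕ) (s : List ℕ) (ℓ i : ℕ) : ℕ :=
  ((s.drop ℓ).take (i - ℓ - 1)).countP (fun t => decide (m < t))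

end LTree


namespace LTree

variable {m : ℕ}

lemma length_eulerF_cons (b : ℕ) (cs rest : List LTree) :
    (eulerF m (node b cs :: rest)).length
      = (eulerF m cs).length + (eulerF m rest).length + 2 := by
  simp [eulerF]; omega

lemma wf_cons {b : ℕ} {cs rest : List LTree} (h : WFforest m (node b cs :: rest)) :
    (1 ≤ b ∧ b ≤ m) ∧ WFforest m cs ∧ WFforest m rest := by
  simp only [WFforest, labelsF, List.mem_cons, List.mem_append] at h
  exact ⟨h b (Or.inl rfl), fun x hx => h x (Or.inr (Or.inl hx)),
    fun x hx => h x (Or.inr (Or.inr hx))⟩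

lemma sym_bounds : ∀ f : List LTree, WFforest m f → ∀ t ∈ eulerF m f, 1 ≤ t ∧ t ≤ 2 * m
  | [], _, t, ht => by simp [eulerF] at ht
  | node b cs :: rest, h, t, ht => by
    obtain ⟨⟨hb1, hb2⟩, hcs, hrest⟩ := wf_cons h
    simp only [eulerF, List.mem_cons, List.mem_append] at ht
    rcases ht with rfl | h1 | rfl | h2
    · omega
    · exact sym_bounds cs hcs t h1
    · omega
    · exact sym_bounds rest hrest t h2

lemma bal : ∀ f : List LTree, WFforest m f →
    (eulerF m f).countP (fun t => decide (t ≤ m))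
      = (eulerF m f).countP (fun t => decide (m < t))
  | [], _ => by simp [eulerF]
  | node b cs :: rest, h => by
    obtain ⟨⟨hb1, hb2⟩, hcs, hrest⟩ := wf_cons h
    have h1 := bal cs hcs
    have h2 := bal rest hrest
    have e1 : (if decide (b ≤ m) = true then 1 else 0) = 1 := by simp; omega
    have e2 : (if decide (m < b) = true then 1 else 0) = 0 := by simp; omega
    have e3 : (if decide (b + m ≤ m) = true then 1 else 0) = 0 := by simp; omega
    have e4 : (if decide (m < b + m) = true then 1 else 0) = 1 := by simp; omega
    simp only [eulerF, List.countP_cons, List.countP_append, e1, e2, e3, e4]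
    omega

lemma pref : ∀ f : List LTree, WFforest m f → ∀ k : ℕ,
    ((eulerF m f).take k).countP (fun t => decide (m < t))
      ≤ ((eulerF m f).take k).countP (fun t => decide (t ≤ m))
  | [], _, k => by simp [eulerF]
  | node b cs :: rest, hwf, k => by
    obtain ⟨⟨hb1, hb2⟩, hcs, hrest⟩ := wf_cons hwf
    match k with
    | 0 => simp
    | (j+1) =>
      have e1 : (if decide (b ≤ m) = true then 1 else 0) = 1 := by simp; omega
      have e2 : (if decide (m < b) = true then 1 else 0) = 0 := by simp; omega
      simp only [eulerF, List.take_succ_cons, List.countP_cons, e1, e2]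
      by_cases hj : j ≤ (eulerF m cs).length
      · rw [List.take_append_of_le_length hj]
        have := pref cs hcs j
        omega
      · rw [List.take_append, List.take_of_length_le (by omega)]
        have hj' : j - (eulerF m cs).length = (j - (eulerF m cs).length - 1) + 1 := by omega
        rw [hj', List.take_succ_cons]
        have e3 : (if decide (b + m ≤ m) = true then 1 else 0) = 0 := by simp; omega
        have e4 : (if decide (m < b + m) = true then 1 else 0) = 1 := by simp; omega
        simp only [List.countP_append, List.countP_cons, e3, e4]
        have h1 := bal cs hcs
        have h2 := pref rest hrest (j - (eulerF m cs).length - 1)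
        omega

lemma pairsV_shift : ∀ (f : List LTree) (o o' : ℕ),
    pairsV m f (o + o') = (pairsV m f o).map (fun x => (x.1, x.2.1 + o', x.2.2 + o'))
  | [], _, _ => by simp [pairsV]
  | node b cs :: rest, o, o' => by
    simp only [pairsV, List.map_cons, List.map_append]
    have h1 : o + o' + 1 = (o + 1) + o' := by omega
    have h2 : o + o' + (eulerF m cs).length + 2 = (o + (eulerF m cs).length + 2) + o' := by
      omega
    rw [h1, h2, pairsV_shift cs (o + 1) o',
      pairsV_shift rest (o + (eulerF m cs).length + 2) o']

lemma pairsF_shift (f : List LTree) (o : ℕ) :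
    pairsF m f o = (pairsF m f 0).map (fun p => (p.1 + o, p.2 + o)) := by
  have h := pairsV_shift (m := m) f 0 o
  rw [Nat.zero_add] at h
  simp only [pairsF, h, List.map_map]
  rfl

lemma mem_pairsF {f : List LTree} {o ℓ i : ℕ} :
    (ℓ, i) ∈ pairsF m f o ↔ ∃ v, (v, ℓ, i) ∈ pairsV m f o := by
  simp only [pairsF, List.mem_map]
  constructor
  · rintro ⟨⟨v, a, b⟩, hv, hp⟩
    obtain ⟨rfl, rfl⟩ : a = ℓ ∧ b = i := by
      have : (a, b) = (ℓ, i) := hp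
      simpa [Prod.ext_iff] using this
    exact ⟨v, hv⟩
  · rintro ⟨v, hv⟩; exact ⟨(v, ℓ, i), hv, rfl⟩

lemma mem_pairsF_shift {f : List LTree} {ℓ i o : ℕ} :
    (ℓ, i) ∈ pairsF m f o ↔ ∃ a b, (a, b) ∈ pairsF m f 0 ∧ ℓ = a + o ∧ i = b + o := by
  rw [pairsF_shift]
  simp only [List.mem_map, Prod.mk.injEq]
  constructor
  · rintro ⟨⟨a, b⟩, h, h1, h2⟩; exact ⟨a, b, h, h1.symm, h2.symm⟩
  · rintro ⟨a, b, h, rfl, rfl⟩; exact ⟨(a, b), h, rfl, rfl⟩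

lemma pairsV_bounds : ∀ (f : List LTree) (o : ℕ) (v : LTree) (ℓ i : ℕ),
    (v, ℓ, i) ∈ pairsV m f o → o + 1 ≤ ℓ ∧ ℓ < i ∧ i ≤ o + (eulerF m f).length
  | [], o, v, ℓ, i => by simp [pairsV]
  | node b cs :: rest, o, v, ℓ, i => by
    intro h
    simp only [pairsV, List.mem_cons, List.mem_append, Prod.mk.injEq] at h
    rw [length_eulerF_cons]
    rcases h with ⟨_, h2, h3⟩ | h | h
    · omega
    · have := pairsV_bounds cs (o + 1) v ℓ i h
      omega
    · have := pairsV_bounds rest (o + (eulerF m cs).length + 2) v ℓ i h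
      omega

lemma pairsF_bounds {f : List LTree} {o ℓ i : ℕ} (h : (ℓ, i) ∈ pairsF m f o) :
    o + 1 ≤ ℓ ∧ ℓ < i ∧ i ≤ o + (eulerF m f).length := by
  rw [mem_pairsF] at h
  obtain ⟨v, hv⟩ := h
  exact pairsV_bounds f o v ℓ i hv

lemma mem_pairsF_cons_left {b : ℕ} {cs rest : List LTree} {ℓ i : ℕ}
    (h : (ℓ, i) ∈ pairsF m cs 1) : (ℓ, i) ∈ pairsF m (node b cs :: rest) 0 := by
  rw [mem_pairsF] at h ⊢
  obtain ⟨v, hv⟩ := h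
  refine ⟨v, ?_⟩
  simp only [pairsV, List.mem_cons, List.mem_append, Nat.zero_add]
  exact Or.inr (Or.inl hv)

lemma mem_pairsF_cons_right {b : ℕ} {cs rest : List LTree} {ℓ i : ℕ}
    (h : (ℓ, i) ∈ pairsF m rest ((eulerF m cs).length + 2)) :
    (ℓ, i) ∈ pairsF m (node b cs :: rest) 0 := by
  rw [mem_pairsF] at h ⊢
  obtain ⟨v, hv⟩ := h
  refine ⟨v, ?_⟩
  simp only [pairsV, List.mem_cons, List.mem_append, Nat.zero_add]
  exact Or.inr (Or.inr hv)

lemma head_mem_pairsF {b : ℕ} {cs rest : List LTree} :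
    (1, (eulerF m cs).length + 2) ∈ pairsF m (node b cs :: rest) 0 := by
  rw [mem_pairsF]
  refine ⟨node b cs, ?_⟩
  simp only [pairsV, List.mem_cons, Nat.zero_add]
  exact Or.inl trivial



lemma pairs_struct : ∀ f : List LTree, WFforest m f → ∀ ℓ i : ℕ, (ℓ, i) ∈ pairsF m f 0 →
    ∃ cs : List LTree, WFforest m cs ∧
      1 ≤ ℓ ∧ ℓ < i ∧ i ≤ (eulerF m f).length ∧
      1 ≤ (eulerF m f).getD (ℓ - 1) 0 ∧ (eulerF m f).getD (ℓ - 1) 0 ≤ m ∧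
      (eulerF m f).getD (i - 1) 0 = (eulerF m f).getD (ℓ - 1) 0 + m ∧
      ((eulerF m f).drop ℓ).take (i - ℓ - 1) = eulerF m cs
  | [], _, ℓ, i => by simp [pairsF, pairsV]
  | node b cs :: rest, hwf, ℓ, i => by
    intro h
    obtain ⟨⟨hb1, hb2⟩, hcs, hrest⟩ := wf_cons hwf
    rw [mem_pairsF] at h
    obtain ⟨v, hv⟩ := h
    have hLrw : eulerF m (node b cs :: rest)
        = b :: (eulerF m cs ++ (b + m) :: eulerF m rest) := by simp [eulerF]
    simp only [pairsV, List.mem_cons, List.mem_append, Prod.mk.injEq, Nat.zero_add] at hv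
    rcases hv with ⟨hv1, hℓ, hi⟩ | hv | hv
    · -- head pair
      subst hℓ; subst hi
      refine ⟨cs, hcs, le_refl 1, by omega, ?_, ?_, ?_, ?_, ?_⟩
      · rw [length_eulerF_cons]; omega
      · rw [hLrw]; simpa using hb1
      · rw [hLrw]; simpa using hb2
      · rw [hLrw]
        have e : (eulerF m cs).length + 2 - 1 = (eulerF m cs).length + 1 := rfl
        rw [e, List.getD_cons_succ, List.getD_append_right _ _ _ _ (le_refl _),
          Nat.sub_self]
        simp
      · rw [hLrw]
        have e : (eulerF m cs).length + 2 - 1 - 1 = (eulerF m cs).length := rfl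
        rw [e, List.drop_succ_cons, List.drop_zero,
          List.take_append_of_le_length (le_refl _), List.take_length]
    · -- pair inside cs
      have hbd := pairsV_bounds cs 1 v ℓ i hv
      have hmem : (ℓ, i) ∈ pairsF m cs 1 := mem_pairsF.mpr ⟨v, hv⟩
      rw [mem_pairsF_shift] at hmem
      obtain ⟨a, b', hab, rfl, rfl⟩ := hmem
      obtain ⟨cs', hcs', ha1, hab2, hbL, hg1, hg2, hgi, hseg⟩ := pairs_struct cs hcs a b' hab
      obtain ⟨a', rfl⟩ : ∃ a', a = a' + 1 := ⟨a - 1, by omega⟩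
      obtain ⟨b'', rfl⟩ : ∃ b'', b' = b'' + 1 := ⟨b' - 1, by omega⟩
      simp only [Nat.add_sub_cancel] at hg1 hg2 hgi
      have hgdl : (eulerF m (node b cs :: rest)).getD (a' + 1 + 1 - 1) 0
          = (eulerF m cs).getD a' 0 := by
        rw [hLrw]
        have e : a' + 1 + 1 - 1 = a' + 1 := rfl
        rw [e, List.getD_cons_succ, List.getD_append _ _ _ _ (by omega)]
      have hgdi : (eulerF m (node b cs :: rest)).getD (b'' + 1 + 1 - 1) 0
          = (eulerF m cs).getD b'' 0 := by
        rw [hLrw]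
        have e : b'' + 1 + 1 - 1 = b'' + 1 := rfl
        rw [e, List.getD_cons_succ, List.getD_append _ _ _ _ (by omega)]
      refine ⟨cs', hcs', by omega, by omega, ?_, ?_, ?_, ?_, ?_⟩
      · rw [length_eulerF_cons]; omega
      · rw [hgdl]; exact hg1
      · rw [hgdl]; exact hg2
      · rw [hgdl, hgdi]; exact hgi
      · rw [hLrw, List.drop_succ_cons,
          List.drop_append_of_le_length (by omega : a' + 1 ≤ (eulerF m cs).length)]
        have e : b'' + 1 + 1 - (a' + 1 + 1) - 1 = b'' + 1 - (a' + 1) - 1 := by omega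
        rw [e, List.take_append_of_le_length
          (by rw [List.length_drop]; omega : b'' + 1 - (a' + 1) - 1 ≤ ((eulerF m cs).drop (a' + 1)).length)]
        exact hseg
    · -- pair inside rest
      have hbd := pairsV_bounds rest ((eulerF m cs).length + 2) v ℓ i hv
      have hmem : (ℓ, i) ∈ pairsF m rest ((eulerF m cs).length + 2) := mem_pairsF.mpr ⟨v, hv⟩
      rw [mem_pairsF_shift] at hmem
      obtain ⟨a, b', hab, rfl, rfl⟩ := hmem
      obtain ⟨cs', hcs', ha1, hab2, hbL, hg1, hg2, hgi, hseg⟩ := pairs_struct rest hrest a b' hab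
      obtain ⟨a', rfl⟩ : ∃ a', a = a' + 1 := ⟨a - 1, by omega⟩
      simp only [Nat.add_sub_cancel] at hg1 hg2 hgi
      have hgetD : ∀ j : ℕ, (eulerF m (node b cs :: rest)).getD (j + (eulerF m cs).length + 1 + 1) 0
          = (eulerF m rest).getD j 0 := by
        intro j
        rw [hLrw, List.getD_cons_succ, List.getD_append_right _ _ _ _ (by omega)]
        have e : j + (eulerF m cs).length + 1 - (eulerF m cs).length = j + 1 := by omega
        rw [e, List.getD_cons_succ]
      have hdropR : ∀ j : ℕ, (eulerF m (node b cs :: rest)).drop (j + (eulerF m cs).length + 2)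
          = (eulerF m rest).drop j := by
        intro j
        rw [hLrw]
        have e : j + (eulerF m cs).length + 2 = ((eulerF m cs).length + (j + 1)) + 1 := by omega
        rw [e, List.drop_succ_cons, ← List.drop_drop,
          List.drop_append_of_le_length (le_refl _), List.drop_length, List.nil_append,
          List.drop_succ_cons]
      refine ⟨cs', hcs', by omega, by omega, ?_, ?_, ?_, ?_, ?_⟩
      · rw [length_eulerF_cons]; omega
      · have e : a' + 1 + ((eulerF m cs).length + 2) - 1 = a' + (eulerF m cs).length + 1 + 1 := by omega
        rw [e, hgetD]; exact hg1
      · have e : a' + 1 + ((eulerF m cs).length + 2) - 1 = a' + (eulerF m cs).length + 1 + 1 := by omega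
        rw [e, hgetD]; exact hg2
      · have e1 : b' + ((eulerF m cs).length + 2) - 1 = (b' - 1) + (eulerF m cs).length + 1 + 1 := by omega
        have e2 : a' + 1 + ((eulerF m cs).length + 2) - 1 = a' + (eulerF m cs).length + 1 + 1 := by omega
        rw [e1, e2, hgetD, hgetD]; exact hgi
      · have e2 : b' + ((eulerF m cs).length + 2) - (a' + 1 + ((eulerF m cs).length + 2)) - 1
            = b' - (a' + 1) - 1 := by omega
        have e : a' + 1 + ((eulerF m cs).length + 2) = (a' + 1) + (eulerF m cs).length + 2 := by omega
        rw [e2, e, hdropR]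
        exact hseg

lemma coverage : ∀ f : List LTree, WFforest m f → ∀ i : ℕ, 1 ≤ i → i ≤ (eulerF m f).length →
    m < (eulerF m f).getD (i - 1) 0 → ∃ ℓ, (ℓ, i) ∈ pairsF m f 0
  | [], _, i => by intro h1 h2; simp [eulerF] at h2; omega
  | node b cs :: rest, hwf, i => by
    intro hi1 hi2 hout
    obtain ⟨⟨hb1, hb2⟩, hcs, hrest⟩ := wf_cons hwf
    have hL := length_eulerF_cons (m := m) b cs rest
    have hLrw : eulerF m (node b cs :: rest)
        = b :: (eulerF m cs ++ (b + m) :: eulerF m rest) := by simp [eulerF]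
    rcases Nat.lt_or_ge i 2 with h2 | h2
    · obtain rfl : i = 1 := by omega
      rw [hLrw] at hout
      simp at hout
      omega
    · rcases Nat.lt_or_ge i ((eulerF m cs).length + 2) with h3 | h3
      · -- cs region
        have hgd : (eulerF m (node b cs :: rest)).getD (i - 1) 0
            = (eulerF m cs).getD (i - 2) 0 := by
          rw [hLrw]
          have e : i - 1 = (i - 2) + 1 := by omega
          rw [e, List.getD_cons_succ, List.getD_append _ _ _ _ (by omega)]
        rw [hgd] at hout
        obtain ⟨ℓ0, hℓ0⟩ := coverage cs hcs (i - 1) (by omega) (by omega) (by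
          have e : i - 1 - 1 = i - 2 := by omega
          rw [e]; exact hout)
        refine ⟨ℓ0 + 1, mem_pairsF_cons_left ?_⟩
        rw [mem_pairsF_shift]
        exact ⟨ℓ0, i - 1, hℓ0, rfl, by omega⟩
      · rcases Nat.lt_or_ge i ((eulerF m cs).length + 3) with h4 | h4
        · obtain rfl : i = (eulerF m cs).length + 2 := by omega
          exact ⟨1, head_mem_pairsF⟩
        · -- rest region
          have hgd : (eulerF m (node b cs :: rest)).getD (i - 1) 0
              = (eulerF m rest).getD (i - (eulerF m cs).length - 3) 0 := by
            rw [hLrw]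
            have e : i - 1 = ((eulerF m cs).length + (i - (eulerF m cs).length - 2)) + 1 := by omega
            rw [e, List.getD_cons_succ, List.getD_append_right _ _ _ _ (by omega)]
            have e2 : (eulerF m cs).length + (i - (eulerF m cs).length - 2) - (eulerF m cs).length
                = (i - (eulerF m cs).length - 3) + 1 := by omega
            rw [e2, List.getD_cons_succ]
          rw [hgd] at hout
          obtain ⟨ℓ0, hℓ0⟩ := coverage rest hrest (i - (eulerF m cs).length - 2)
            (by omega) (by omega) (by
              have e : i - (eulerF m cs).length - 2 - 1 = i - (eulerF m cs).length - 3 := by omega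
              rw [e]; exact hout)
          refine ⟨ℓ0 + ((eulerF m cs).length + 2), mem_pairsF_cons_right ?_⟩
          rw [mem_pairsF_shift]
          exact ⟨ℓ0, i - (eulerF m cs).length - 2, hℓ0, rfl, by omega⟩

end LTree

namespace LTree

variable {m : ℕ}

lemma fwd (f : List LTree) (hwf : WFforest m f) (ℓ i : ℕ)
    (h : (ℓ, i) ∈ pairsF m f 0) :
    1 ≤ ℓ ∧ ℓ ≤ i - 1 ∧
      (eulerF m f).getD (i - 1) 0 = (eulerF m f).getD (ℓ - 1) 0 + m ∧
      inBetween m (eulerF m f) ℓ i = outBetween m (eulerF m f) ℓ i ∧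
      ∀ ℓ', ℓ < ℓ' → ℓ' ≤ i - 1 →
        ¬((eulerF m f).getD (i - 1) 0 = (eulerF m f).getD (ℓ' - 1) 0 + m ∧
          inBetween m (eulerF m f) ℓ' i = outBetween m (eulerF m f) ℓ' i) := by
  obtain ⟨cs, hcs, h1, h2, h3, hg1, hg2, hgi, hseg⟩ := pairs_struct f hwf ℓ i h
  refine ⟨h1, by omega, hgi, ?_, ?_⟩
  · unfold inBetween outBetween
    rw [hseg]
    exact bal cs hcs
  · rintro ℓ' hlt hle ⟨hii, hbb⟩
    have hlen : ℓ' - 1 < (eulerF m f).length := by omega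
    by_cases hgle : (eulerF m f).getD (ℓ' - 1) 0 ≤ m
    · -- ℓ' is an inward position: counting contradiction
      have hdec : ((eulerF m f).drop ℓ).take (i - ℓ - 1)
          = ((eulerF m f).drop ℓ).take (ℓ' - 1 - ℓ)
            ++ (eulerF m f).getD (ℓ' - 1) 0 :: ((eulerF m f).drop ℓ').take (i - ℓ' - 1) := by
        have e1 : i - ℓ - 1 = (ℓ' - 1 - ℓ) + ((i - ℓ' - 1) + 1) := by omega
        rw [e1, List.take_add, List.drop_drop]
        congr 1
        have e2 : ℓ + (ℓ' - 1 - ℓ) = ℓ' - 1 := by omega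
        rw [e2, List.drop_eq_getElem_cons hlen, List.take_succ_cons]
        have e3 : ℓ' - 1 + 1 = ℓ' := by omega
        rw [e3, List.getD_eq_getElem _ 0 hlen]
      have hcnt1 := congrArg (List.countP (fun t => decide (t ≤ m))) hdec
      have hcnt2 := congrArg (List.countP (fun t => decide (m < t))) hdec
      rw [hseg] at hcnt1 hcnt2
      simp only [List.countP_append, List.countP_cons] at hcnt1 hcnt2
      have hin : (if decide ((eulerF m f).getD (ℓ' - 1) 0 ≤ m) = true then 1 else 0) = 1 := by
        rw [decide_eq_true hgle]
        simp
      have hou : (if decide (m < (eulerF m f).getD (ℓ' - 1) 0) = true then 1 else 0) = 0 := by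
        rw [decide_eq_false (by omega : ¬ m < (eulerF m f).getD (ℓ' - 1) 0)]
        simp
      rw [hin] at hcnt1
      rw [hou] at hcnt2
      have hpreq : ((eulerF m f).drop ℓ).take (ℓ' - 1 - ℓ)
          = (eulerF m cs).take (ℓ' - 1 - ℓ) := by
        rw [← hseg, List.take_take, min_eq_left (by omega)]
      have hpre := pref cs hcs (ℓ' - 1 - ℓ)
      rw [← hpreq] at hpre
      have hbal := bal cs hcs
      unfold inBetween outBetween at hbb
      omega
    · -- ℓ' is an outward position: symbol bound contradiction
      have hi' : i - 1 < (eulerF m f).length := by omega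
      have hmem : (eulerF m f).getD (i - 1) 0 ∈ eulerF m f := by
        rw [List.getD_eq_getElem _ 0 hi']
        exact List.getElem_mem hi'
      have h2m := (sym_bounds f hwf _ hmem).2
      omega

end LTree

theorem matching_characterization (m : ℕ) (hm : 1 ≤ m) (f : List LTree)
    (hwf : LTree.WFforest m f) (ℓ i : ℕ) (hi1 : 1 ≤ i)
    (hi2 : i ≤ (LTree.eulerF m f).length) :
    (ℓ, i) ∈ LTree.pairsF m f 0 ↔
      (1 ≤ ℓ ∧ ℓ ≤ i - 1 ∧
        (LTree.eulerF m f).getD (i - 1) 0 = (LTree.eulerF m f).getD (ℓ - 1) 0 + m ∧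
        LTree.inBetween m (LTree.eulerF m f) ℓ i =
          LTree.outBetween m (LTree.eulerF m f) ℓ i ∧
        ∀ ℓ', ℓ < ℓ' → ℓ' ≤ i - 1 →
          ¬((LTree.eulerF m f).getD (i - 1) 0 = (LTree.eulerF m f).getD (ℓ' - 1) 0 + m ∧
            LTree.inBetween m (LTree.eulerF m f) ℓ' i =
              LTree.outBetween m (LTree.eulerF m f) ℓ' i)) := by
  constructor
  · exact fun h => LTree.fwd f hwf ℓ i h
  · rintro ⟨hr1, hr2, hr3, hr4, hr5⟩
    have hl : ℓ - 1 < (LTree.eulerF m f).length := by omega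
    have hmem : (LTree.eulerF m f).getD (ℓ - 1) 0 ∈ LTree.eulerF m f := by
      rw [List.getD_eq_getElem _ 0 hl]
      exact List.getElem_mem hl
    have h1 := (LTree.sym_bounds f hwf _ hmem).1
    have hout : m < (LTree.eulerF m f).getD (i - 1) 0 := by omega
    obtain ⟨ℓs, hs⟩ := LTree.coverage f hwf i hi1 hi2 hout
    obtain ⟨k1, k2, k3, k4, k5⟩ := LTree.fwd f hwf ℓs i hs
    rcases lt_trichotomy ℓ ℓs with hlt | rfl | hgt
    · exact absurd ⟨k3, k4⟩ (hr5 ℓs hlt k2)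
    · exact hs
    · exact absurd ⟨hr3, hr4⟩ (k5 ℓ hgt hr2)
end

section
/- Leaf deletion acts locally on the Euler string: let T be a rooted ordered labeled tree and v a leaf (non-root vertex with no children) whose inward and outward edges occupy consecutive positions ℓ and ℓ+1 of E(T). If U is the tree obtained from T by deleting v, then E(U) is obtained from E(T) by deleting the two symbols at positions ℓ and ℓ+1. -/
namespace LTree

/-- `DeleteLeafAt m f ℓ g`: `g` is obtained from `f` by deleting a leaf whose inward and
outward edges occupy the consecutive (1-indexed) positions `ℓ` and `ℓ+1`. -/
inductive DeleteLeafAt (m : ℕ) : List LTree → ℕ → List LTree → Prop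
  | here {b : ℕ} {rest : List LTree} : DeleteLeafAt m (node b [] :: rest) 1 rest
  | child {b p : ℕ} {cs cs' rest : List LTree} :
      DeleteLeafAt m cs p cs' →
      DeleteLeafAt m (node b cs :: rest) (p + 1) (node b cs' :: rest)
  | tail {p : ℕ} {t : LTree} {rest rest' : List LTree} :
      DeleteLeafAt m rest p rest' →
      DeleteLeafAt m (t :: rest) (p + (eulerT m t).length) (t :: rest')

end LTree

namespace LTree

lemma delete_pos_bound {m : ℕ} {f g : List LTree} {ℓ : ℕ}
    (h : DeleteLeafAt m f ℓ g) : 1 ≤ ℓ ∧ ℓ + 1 ≤ (eulerF m f).length := by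
  induction h with
  | @here b rest => simp [eulerF]
  | @child b p cs cs' rest h ih => simp [eulerF] at *; omega
  | @tail p t rest rest' h ih =>
    obtain ⟨b, cs⟩ := t
    simp [eulerF, eulerT] at *; omega

lemma delete_pair {m : ℕ} {f g : List LTree} {ℓ : ℕ}
    (h : DeleteLeafAt m f ℓ g) : ∀ o, (o + ℓ, o + ℓ + 1) ∈ pairsF m f o := by
  induction h with
  | @here b rest =>
    intro o; simp [pairsF, pairsV, eulerF]
  | @child b p cs cs' rest h ih =>
    intro o
    have := ih (o + 1)
    simp only [pairsF, pairsV, List.map_cons, List.map_append, List.mem_cons,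
      List.mem_append] at *
    refine Or.inr (Or.inl ?_)
    convert this using 2 <;> omega
  | @tail p t rest rest' h ih =>
    intro o
    obtain ⟨b, cs⟩ := t
    have := ih (o + (eulerF m cs).length + 2)
    simp only [pairsF, pairsV, List.map_cons, List.map_append, List.mem_cons,
      List.mem_append, eulerT, eulerF] at *
    refine Or.inr (Or.inr ?_)
    convert this using 2 <;> simp <;> omega

lemma delete_euler {m : ℕ} {f g : List LTree} {ℓ : ℕ}
    (h : DeleteLeafAt m f ℓ g) :
    eulerF m g = (eulerF m f).take (ℓ - 1) ++ (eulerF m f).drop (ℓ + 1) := by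
  induction h with
  | @here b rest => simp [eulerF]
  | @child b p cs cs' rest h ih =>
    have hb := delete_pos_bound h
    obtain ⟨q, rfl⟩ : ∃ q, p = q + 1 := ⟨p - 1, by omega⟩
    simp only [eulerF]
    have h1 : q + 1 + 1 - 1 = q + 1 := rfl
    rw [h1, List.take_succ_cons, show q + 1 + 1 + 1 = q + 2 + 1 from rfl,
      List.drop_succ_cons,
      List.take_append_of_le_length (by omega),
      List.drop_append_of_le_length (by omega), ih]
    simp
  | @tail p t rest rest' h ih =>
    obtain ⟨b, cs⟩ := t
    have hb := delete_pos_bound h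
    obtain ⟨q, rfl⟩ : ∃ q, p = q + 1 := ⟨p - 1, by omega⟩
    simp only [eulerF, eulerT] at *
    rw [List.append_cons (eulerF m cs) (b + m) (eulerF m rest),
        List.append_cons (eulerF m cs) (b + m) (eulerF m rest')]
    have hlen : (eulerF m cs ++ [b + m]).length = (eulerF m cs).length + 1 := by simp
    have h1 : q + 1 + (b :: (eulerF m cs ++ [b + m])).length - 1
        = ((eulerF m cs ++ [b + m]).length + q) + 1 := by simp; omega
    have h2 : q + 1 + (b :: (eulerF m cs ++ [b + m])).length + 1
        = ((eulerF m cs ++ [b + m]).length + (q + 2)) + 1 := by simp; omega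
    rw [h1, h2, List.take_succ_cons, List.drop_succ_cons,
      List.take_append, List.drop_append, ih]
    have e1 : List.take ((eulerF m cs).length + 1 + q) (eulerF m cs ++ [b + m])
        = eulerF m cs ++ [b + m] := List.take_of_length_le (by simp)
    have e2 : List.drop ((eulerF m cs).length + 1 + (q + 2)) (eulerF m cs ++ [b + m])
        = [] := List.drop_of_length_le (by simp)
    simp [e1, e2]

end LTree

theorem deleteLeaf_euler (m : ℕ) (f g : List LTree) (ℓ : ℕ)
    (h : LTree.DeleteLeafAt m f ℓ g) :
    (ℓ, ℓ + 1) ∈ LTree.pairsF m f 0 ∧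
    LTree.eulerF m g = (LTree.eulerF m f).take (ℓ - 1) ++ (LTree.eulerF m f).drop (ℓ + 1)
    := by
  refine ⟨?_, LTree.delete_euler h⟩
  simpa using LTree.delete_pair h 0
end

section
/- Deleting a non-root vertex changes the Euler string by removing exactly two symbols: if T is a rooted ordered labeled tree, v a non-root vertex with matched Euler-string positions (ℓ, i), and U is the tree obtained from T by deleting v (promoting v's children, in order, to the position of v among its parent's children), then E(U) equals E(T) with the symbols at positions ℓ and i removed. Consequently the string edit distance between E(T) and E(U) is at most 2. -/
namespace LTree

/-- `DeleteAt m f ℓ i g`: `g` is obtained from `f` by deleting the (non-root) vertex whose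
inward/outward edges occupy the (1-indexed) positions `ℓ` and `i`, promoting its children
in order to its former position. -/
inductive DeleteAt (m : ℕ) : List LTree → ℕ → ℕ → List LTree → Prop
  | here {b : ℕ} {cs rest : List LTree} :
      DeleteAt m (node b cs :: rest) 1 ((eulerF m cs).length + 2) (cs ++ rest)
  | child {b p q : ℕ} {cs cs' rest : List LTree} :
      DeleteAt m cs p q cs' →
      DeleteAt m (node b cs :: rest) (p + 1) (q + 1) (node b cs' :: rest)
  | tail {p q : ℕ} {t : LTree} {rest rest' : List LTree} :
      DeleteAt m rest p q rest' →
      DeleteAt m (t :: rest) (p + (eulerT m t).length) (q + (eulerT m t).length)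
        (t :: rest')

end LTree

/-- One string edit operation: substitution, deletion, or insertion of a symbol. -/
inductive EditStep : List ℕ → List ℕ → Prop
  | subst (u w : List ℕ) (a b : ℕ) : EditStep (u ++ a :: w) (u ++ b :: w)
  | delete (u w : List ℕ) (a : ℕ) : EditStep (u ++ a :: w) (u ++ w)
  | insert (u w : List ℕ) (a : ℕ) : EditStep (u ++ w) (u ++ a :: w)

/-- String edit distance at most `d`. -/
def EditLe : ℕ → List ℕ → List ℕ → Prop
  | 0, s, t => s = t
  | d + 1, s, t => s = t ∨ ∃ u, EditStep s u ∧ EditLe d u t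


namespace LTree

lemma eulerF_append (m : ℕ) (f g : List LTree) :
    eulerF m (f ++ g) = eulerF m f ++ eulerF m g := by
  induction f with
  | nil => simp [eulerF]
  | cons t rest ih => cases t; simp [eulerF, ih]

lemma eulerF_cons (m : ℕ) (t : LTree) (rest : List LTree) :
    eulerF m (t :: rest) = eulerT m t ++ eulerF m rest := by
  cases t; simp [eulerF, eulerT]

lemma deleteAt_structured {m : ℕ} {f g : List LTree} {ℓ i : ℕ}
    (h : DeleteAt m f ℓ i g) :
    ∃ (u v w : List ℕ) (a b : ℕ),
      eulerF m f = u ++ a :: (v ++ b :: w) ∧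
      eulerF m g = u ++ (v ++ w) ∧
      u.length + 1 = ℓ ∧ u.length + v.length + 2 = i := by
  induction h with
  | @here b cs rest =>
      exact ⟨[], eulerF m cs, eulerF m rest, b, b + m, by simp [eulerF],
        by simp [eulerF_append], by simp, by simp⟩
  | @child b p q cs cs' rest _ ih =>
      obtain ⟨u, v, w, a, b', h1, h2, h3, h4⟩ := ih
      refine ⟨b :: u, v, w ++ (b + m) :: eulerF m rest, a, b', ?_, ?_, ?_, ?_⟩
      · simp [eulerF, h1]
      · simp [eulerF, h2]
      · simp [← h3]
      · simp [← h4]; omega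
  | @tail p q t rest rest' _ ih =>
      obtain ⟨u, v, w, a, b', h1, h2, h3, h4⟩ := ih
      refine ⟨eulerT m t ++ u, v, w, a, b', ?_, ?_, ?_, ?_⟩
      · simp [eulerF_cons, h1]
      · simp [eulerF_cons, h2]
      · simp [← h3]; omega
      · simp [← h4]; omega

end LTree

theorem delete_vertex_euler (m : ℕ) (f g : List LTree) (ℓ i : ℕ)
    (h : LTree.DeleteAt m f ℓ i g) :
    LTree.eulerF m g =
      (LTree.eulerF m f).take (ℓ - 1) ++
        ((LTree.eulerF m f).drop ℓ).take (i - ℓ - 1) ++ (LTree.eulerF m f).drop i ∧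
    EditLe 2 (LTree.eulerF m f) (LTree.eulerF m g) := by
  obtain ⟨u, v, w, a, b, h1, h2, h3, h4⟩ := LTree.deleteAt_structured h
  have hℓ : ℓ - 1 = u.length := by omega
  have hi1 : i - ℓ - 1 = v.length := by omega
  constructor
  · rw [h1, h2, hℓ, hi1]
    have hdℓ : (u ++ a :: (v ++ b :: w)).drop ℓ = v ++ b :: w := by
      rw [show ℓ = u.length + 1 by omega]
      rw [List.drop_append]
      simp
    have hdi : (u ++ a :: (v ++ b :: w)).drop i = w := by
      rw [show i = (u ++ a :: v).length + 1 by simp; omega]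
      rw [show u ++ a :: (v ++ b :: w) = (u ++ a :: v) ++ b :: w by simp]
      rw [List.drop_append]
      simp
    rw [hdℓ, hdi]
    simp [List.take_append, List.take_left]
  · rw [h1, h2]
    refine Or.inr ⟨u ++ (v ++ b :: w), EditStep.delete u (v ++ b :: w) a, Or.inr ?_⟩
    refine ⟨u ++ (v ++ w), ?_, rfl⟩
    have := EditStep.delete (u ++ v) w b
    simpa using this
end

section
/- For each outward position of an Euler string there is a unique matching inward position: if E(T) = t₁,…,t_{2n} and i is a position with t_i > m, then there exists exactly one position ℓ such that ℓ < i, t_i = t_ℓ + m, the number of inward symbols strictly between positions ℓ and i equals the number of outward symbols strictly between them, and ℓ is maximal among positions satisfying the first three conditions; moreover this ℓ is precisely the inward edge position of the vertex whose outward edge is at position i. -/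
namespace LTree

/- ### auxiliary machinery -/

def cIn (m : ℕ) (s : List ℕ) : ℕ := s.countP (fun t => decide (t ≤ m))
def cOut (m : ℕ) (s : List ℕ) : ℕ := s.countP (fun t => decide (m < t))

lemma WF_cons {m b : ℕ} {cs rest : List LTree} (h : WFforest m (node b cs :: rest)) :
    (1 ≤ b ∧ b ≤ m) ∧ WFforest m cs ∧ WFforest m rest := by
  refine ⟨h b ?_, fun x hx => h x ?_, fun x hx => h x ?_⟩ <;>
    simp [labelsF, List.mem_cons, List.mem_append] <;> tauto

lemma euler_balance (m : ℕ) (f : List LTree) (hwf : WFforest m f) :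
    cIn m (eulerF m f) = cOut m (eulerF m f) := by
  induction f using eulerF.induct with
  | case1 => simp [eulerF, cIn, cOut]
  | case2 b cs rest ihc ihr =>
    obtain ⟨⟨hb1, hb2⟩, hc, hr⟩ := WF_cons hwf
    have h1 := ihc hc; have h2 := ihr hr
    simp only [eulerF, cIn, cOut, List.countP_cons, List.countP_append] at *
    have e1 : decide (b ≤ m) = true := by simp; omega
    have e2 : decide (m < b) = false := by simp; omega
    have e3 : decide (b + m ≤ m) = false := by simp; omega
    have e4 : decide (m < b + m) = true := by simp; omega
    rw [e1, e2, e3, e4] at *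
    simp at *
    omega

lemma dyck (m : ℕ) (f : List LTree) (hwf : WFforest m f) (j : ℕ) :
    cOut m ((eulerF m f).take j) ≤ cIn m ((eulerF m f).take j) := by
  induction f using eulerF.induct generalizing j with
  | case1 => simp [eulerF, cIn, cOut]
  | case2 b cs rest ihc ihr =>
    obtain ⟨⟨hb1, hb2⟩, hc, hr⟩ := WF_cons hwf
    match j with
    | 0 => simp [cIn, cOut]
    | Nat.succ k =>
      have hbal := euler_balance m cs hc
      rw [show eulerF m (node b cs :: rest)
            = b :: (eulerF m cs ++ (b + m) :: eulerF m rest) by simp [eulerF]]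
      rw [show k.succ = k + 1 from rfl, List.take_succ_cons, List.take_append]
      rcases le_or_gt k (eulerF m cs).length with hk | hk
      · have hz : k - (eulerF m cs).length = 0 := by omega
        rw [hz]
        have := ihc hc k
        simp only [cIn, cOut, List.countP_cons, List.countP_append,
          List.take_zero, List.countP_nil] at *
        have e1 : decide (b ≤ m) = true := by simp; omega
        have e2 : decide (m < b) = false := by simp; omega
        rw [e1, e2]; simp; omega
      · have hz : k - (eulerF m cs).length = (k - (eulerF m cs).length - 1) + 1 := by omega
        rw [hz, List.take_of_length_le (le_of_lt hk), List.take_succ_cons]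
        have := ihr hr (k - (eulerF m cs).length - 1)
        simp only [cIn, cOut, List.countP_cons, List.countP_append] at *
        have e1 : decide (b ≤ m) = true := by simp; omega
        have e2 : decide (m < b) = false := by simp; omega
        have e3 : decide (b + m ≤ m) = false := by simp; omega
        have e4 : decide (m < b + m) = true := by simp; omega
        rw [e1, e2, e3, e4]; simp; omega

lemma pairsV_spec (m : ℕ) (f : List LTree) :
    ∀ o t ℓ i, (t, ℓ, i) ∈ pairsV m f o →
    ∃ b cs p q, eulerF m f = p ++ b :: (eulerF m cs ++ (b + m) :: q) ∧
      ℓ = o + p.length + 1 ∧ i = ℓ + (eulerF m cs).length + 1 ∧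
      b ∈ labelsF f ∧ ∀ x ∈ labelsF cs, x ∈ labelsF f := by
  induction f using eulerF.induct with
  | case1 => simp [pairsV]
  | case2 b cs rest ihc ihr =>
    intro o t ℓ i hmem
    simp only [pairsV, List.mem_cons, List.mem_append] at hmem
    rcases hmem with h | h | h
    · simp only [Prod.mk.injEq] at h
      obtain ⟨rfl, rfl, rfl⟩ := h
      refine ⟨b, cs, [], eulerF m rest, by simp [eulerF], by simp, by omega, by simp [labelsF], ?_⟩
      intro x hx; simp [labelsF, List.mem_cons, List.mem_append]; tauto
    · obtain ⟨b', cs', p, q, heq, hℓ, hi, hbl, hsub⟩ := ihc _ _ _ _ h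
      refine ⟨b', cs', b :: p, q ++ (b + m) :: eulerF m rest, ?_, ?_, hi, ?_, ?_⟩
      · simp only [eulerF]; rw [heq]; simp
      · simp; omega
      · simp [labelsF, List.mem_cons, List.mem_append]; tauto
      · intro x hx
        simp [labelsF, List.mem_cons, List.mem_append]
        have := hsub x hx; tauto
    · obtain ⟨b', cs', p, q, heq, hℓ, hi, hbl, hsub⟩ := ihr _ _ _ _ h
      refine ⟨b', cs', b :: (eulerF m cs ++ (b + m) :: p), q, ?_, ?_, hi, ?_, ?_⟩
      · simp only [eulerF]; rw [heq]; simp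
      · simp; omega
      · simp [labelsF, List.mem_cons, List.mem_append]; tauto
      · intro x hx
        simp [labelsF, List.mem_cons, List.mem_append]
        have := hsub x hx; tauto

lemma pairsV_cover (m : ℕ) (f : List LTree) (hwf : WFforest m f) :
    ∀ j, j < (eulerF m f).length → m < (eulerF m f).getD j 0 →
      ∀ o, ∃ t ℓ, (t, ℓ, o + j + 1) ∈ pairsV m f o := by
  induction f using eulerF.induct with
  | case1 => intro j hj; simp [eulerF] at hj
  | case2 b cs rest ihc ihr =>
    intro j hj hout o
    obtain ⟨⟨hb1, hb2⟩, hc, hr⟩ := WF_cons hwf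
    match j with
    | 0 =>
      rw [show eulerF m (node b cs :: rest)
            = b :: (eulerF m cs ++ (b + m) :: eulerF m rest) by simp [eulerF]] at hout
      simp [List.getD_cons_zero] at hout; omega
    | Nat.succ k =>
      rw [show eulerF m (node b cs :: rest)
            = b :: (eulerF m cs ++ (b + m) :: eulerF m rest) by simp [eulerF]] at hout hj
      rw [List.getD_cons_succ] at hout
      simp only [List.length_cons, List.length_append, List.length_cons] at hj
      rcases lt_trichotomy k (eulerF m cs).length with hk | hk | hk
      · rw [List.getD_append _ _ _ _ hk] at hout
        obtain ⟨t, ℓ, hmem⟩ := ihc hc k hk hout (o + 1)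
        refine ⟨t, ℓ, ?_⟩
        have he : o + 1 + k + 1 = o + (k + 1) + 1 := by omega
        rw [he] at hmem
        simp only [pairsV, List.mem_cons, List.mem_append]; tauto
      · refine ⟨node b cs, o + 1, ?_⟩
        simp only [pairsV, List.mem_cons]
        left
        rw [hk]; rfl
      · rw [List.getD_append_right _ _ _ _ (by omega)] at hout
        have hz : k - (eulerF m cs).length = (k - (eulerF m cs).length - 1) + 1 := by omega
        rw [hz, List.getD_cons_succ] at hout
        obtain ⟨t, ℓ, hmem⟩ := ihr hr _ (by omega) hout (o + (eulerF m cs).length + 2)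
        refine ⟨t, ℓ, ?_⟩
        have he : o + (eulerF m cs).length + 2 + (k - (eulerF m cs).length - 1) + 1
            = o + (k + 1) + 1 := by omega
        rw [he] at hmem
        simp only [pairsV, List.mem_cons, List.mem_append]; tauto

end LTree

theorem outward_unique_match (m : ℕ) (hm : 1 ≤ m) (f : List LTree)
    (hwf : LTree.WFforest m f) (i : ℕ) (hi1 : 1 ≤ i)
    (hi2 : i ≤ (LTree.eulerF m f).length)
    (hout : m < (LTree.eulerF m f).getD (i - 1) 0) :
    (∃! ℓ, 1 ≤ ℓ ∧ ℓ < i ∧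
        (LTree.eulerF m f).getD (i - 1) 0 = (LTree.eulerF m f).getD (ℓ - 1) 0 + m ∧
        LTree.inBetween m (LTree.eulerF m f) ℓ i =
          LTree.outBetween m (LTree.eulerF m f) ℓ i ∧
        (∀ ℓ', ℓ < ℓ' → ℓ' < i →
          ¬((LTree.eulerF m f).getD (i - 1) 0 = (LTree.eulerF m f).getD (ℓ' - 1) 0 + m ∧
            LTree.inBetween m (LTree.eulerF m f) ℓ' i =
              LTree.outBetween m (LTree.eulerF m f) ℓ' i))) ∧
    (∀ ℓ, (1 ≤ ℓ ∧ ℓ < i ∧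
        (LTree.eulerF m f).getD (i - 1) 0 = (LTree.eulerF m f).getD (ℓ - 1) 0 + m ∧
        LTree.inBetween m (LTree.eulerF m f) ℓ i =
          LTree.outBetween m (LTree.eulerF m f) ℓ i ∧
        (∀ ℓ', ℓ < ℓ' → ℓ' < i →
          ¬((LTree.eulerF m f).getD (i - 1) 0 = (LTree.eulerF m f).getD (ℓ' - 1) 0 + m ∧
            LTree.inBetween m (LTree.eulerF m f) ℓ' i =
              LTree.outBetween m (LTree.eulerF m f) ℓ' i))) →
      (ℓ, i) ∈ LTree.pairsF m f 0) := by
  classical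
  -- obtain the matched pair covering position i
  obtain ⟨t, ℓ₀, hmem⟩ := LTree.pairsV_cover m f hwf (i - 1) (by omega) hout 0
  rw [show 0 + (i - 1) + 1 = i by omega] at hmem
  obtain ⟨b, cs, p, q, heq, hℓ₀, hieq, hbl, hsub⟩ := LTree.pairsV_spec m f 0 t ℓ₀ i hmem
  set s := LTree.eulerF m f with hs
  obtain ⟨hb1, hb2⟩ := hwf b hbl
  have hwfcs : LTree.WFforest m cs := fun x hx => hwf x (hsub x hx)
  have hℓ₀' : ℓ₀ = p.length + 1 := by omega
  set E := LTree.eulerF m cs with hE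
  have hs1 : s = (p ++ [b]) ++ (E ++ (b + m) :: q) := by rw [heq]; simp
  have hlen1 : (p ++ [b]).length = ℓ₀ := by simp; omega
  -- position values
  have hgi : s.getD (i - 1) 0 = b + m := by
    rw [heq, show p ++ b :: (E ++ (b + m) :: q) = (p ++ b :: E) ++ (b + m) :: q by simp]
    rw [List.getD_append_right _ _ _ _ (by simp; omega)]
    have : i - 1 - (p ++ b :: E).length = 0 := by simp; omega
    rw [this]; rfl
  have hgl : s.getD (ℓ₀ - 1) 0 = b := by
    rw [heq, List.getD_append_right _ _ _ _ (by omega)]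
    have : ℓ₀ - 1 - p.length = 0 := by omega
    rw [this]; rfl
  have hdrop : s.drop ℓ₀ = E ++ (b + m) :: q := by
    rw [hs1]
    exact List.drop_left' hlen1
  -- ℓ₀ satisfies the balance condition
  have hbal0 : LTree.inBetween m s ℓ₀ i = LTree.outBetween m s ℓ₀ i := by
    unfold LTree.inBetween LTree.outBetween
    rw [hdrop, show i - ℓ₀ - 1 = E.length by omega, List.take_left]
    exact LTree.euler_balance m cs hwfcs
  -- maximality of ℓ₀
  have hmax : ∀ ℓ', ℓ₀ < ℓ' → ℓ' < i →
      ¬(s.getD (i - 1) 0 = s.getD (ℓ' - 1) 0 + m ∧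
        LTree.inBetween m s ℓ' i = LTree.outBetween m s ℓ' i) := by
    intro ℓ' h1 h2 ⟨h3, h4⟩
    set j := ℓ' - ℓ₀ with hj
    have hj1 : 1 ≤ j := by omega
    have hj2 : j ≤ E.length := by omega
    have hgl' : s.getD (ℓ' - 1) 0 = E.getD (j - 1) 0 := by
      rw [hs1, List.getD_append_right _ _ _ _ (by omega)]
      rw [show ℓ' - 1 - (p ++ [b]).length = j - 1 by simp; omega]
      exact List.getD_append _ _ _ _ (by omega)
    set c := E.getD (j - 1) 0 with hc
    rcases le_or_gt c m with hcm | hcm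
    · -- inward symbol at ℓ' : balance fails
      have hdrop' : s.drop ℓ' = E.drop j ++ (b + m) :: q := by
        have : s.drop ℓ' = (s.drop ℓ₀).drop j := by
          rw [List.drop_drop]; congr 1; omega
        rw [this, hdrop, List.drop_append,
          show j - E.length = 0 by omega, List.drop_zero]
      have hseg : (s.drop ℓ').take (i - ℓ' - 1) = E.drop j := by
        rw [hdrop', show i - ℓ' - 1 = E.length - j by omega]
        exact List.take_left' (by simp)
      unfold LTree.inBetween LTree.outBetween at h4
      rw [hseg] at h4
      -- counts over take j
      have hlt : j - 1 < E.length := by omega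
      have hgc : E[j - 1]? = some c := by
        rw [List.getElem?_eq_getElem hlt, hc, List.getD_eq_getElem E 0 hlt]
      have htake : E.take j = E.take (j - 1) ++ [c] := by
        rw [show j = (j - 1) + 1 by omega, List.take_succ, hgc]
        rfl
      have hdy := LTree.dyck m cs hwfcs (j - 1)
      have hbalE := LTree.euler_balance m cs hwfcs
      have hsplit : E.take j ++ E.drop j = E := List.take_append_drop j E
      have e1 : (E.take j).countP (fun t => decide (t ≤ m))
          = (E.take (j - 1)).countP (fun t => decide (t ≤ m)) + 1 := by
        rw [htake, List.countP_append]; simp [hcm]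
      have e2 : (E.take j).countP (fun t => decide (m < t))
          = (E.take (j - 1)).countP (fun t => decide (m < t)) := by
        rw [htake, List.countP_append]; simp; omega
      have e3 := congrArg (List.countP (fun t => decide (t ≤ m))) hsplit
      have e4 := congrArg (List.countP (fun t => decide (m < t))) hsplit
      rw [List.countP_append] at e3 e4
      simp only [LTree.cIn, LTree.cOut, ← hE] at hdy hbalE
      omega
    · -- outward symbol at ℓ' : label match fails
      rw [hgi, hgl'] at h3
      omega
  -- the full property for ℓ₀
  have hP : 1 ≤ ℓ₀ ∧ ℓ₀ < i ∧
      s.getD (i - 1) 0 = s.getD (ℓ₀ - 1) 0 + m ∧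
      LTree.inBetween m s ℓ₀ i = LTree.outBetween m s ℓ₀ i ∧
      (∀ ℓ', ℓ₀ < ℓ' → ℓ' < i →
        ¬(s.getD (i - 1) 0 = s.getD (ℓ' - 1) 0 + m ∧
          LTree.inBetween m s ℓ' i = LTree.outBetween m s ℓ' i)) := by
    exact ⟨by omega, by omega, by rw [hgi, hgl], hbal0, hmax⟩
  -- any ℓ with the property equals ℓ₀
  have huniq : ∀ ℓ, (1 ≤ ℓ ∧ ℓ < i ∧
      s.getD (i - 1) 0 = s.getD (ℓ - 1) 0 + m ∧
      LTree.inBetween m s ℓ i = LTree.outBetween m s ℓ i ∧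
      (∀ ℓ', ℓ < ℓ' → ℓ' < i →
        ¬(s.getD (i - 1) 0 = s.getD (ℓ' - 1) 0 + m ∧
          LTree.inBetween m s ℓ' i = LTree.outBetween m s ℓ' i))) → ℓ = ℓ₀ := by
    intro ℓ ⟨hy1, hy2, hy3, hy4, hy5⟩
    rcases lt_trichotomy ℓ ℓ₀ with h | h | h
    · exact absurd ⟨hP.2.2.1, hP.2.2.2.1⟩ (hy5 ℓ₀ h (by omega))
    · exact h
    · exact absurd ⟨hy3, hy4⟩ (hmax ℓ h hy2)
  constructor
  · exact ⟨ℓ₀, hP, huniq⟩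
  · intro ℓ hℓ
    have := huniq ℓ hℓ
    subst this
    exact List.mem_map_of_mem (f := Prod.snd) hmem
end
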